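/- Let N ≥ 1 and R > 0, and let v : [0,R] → ℝ be continuous and non-decreasing with v(0) = 0, differentiable almost everywhere on (0,R), such that the function s ↦ v'(s)/s^{N-1} is non-increasing on (0,R) and v is locally absolutely continuous on (0,R]. If v(r) = (r/R)^N · v(R) for some r ∈ (0,R), then v(s) = (s/R)^N · v(R) for every s ∈ [0,R]. -/

import Mathlib

open MeasureTheory

theorem stmt_1 (N R : ℝ) (hN : 1 ≤ N) (hR : 0 < R) (v v' : ℝ → ℝ)
    (hcont : ContinuousOn v (Set.Icc 0 R))
    (hmono : MonotoneOn v (Set.Icc 0 R))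
    (hv0 : v 0 = 0)
    (hderiv : ∀ᵐ s ∂(volume.restrict (Set.Ioo 0 R)), HasDerivAt v (v' s) s)
    (hanti : AntitoneOn (fun s => v' s / s ^ (N - 1)) (Set.Ioo 0 R))
    (hFTC : ∀ a b : ℝ, 0 < a → a ≤ b → b ≤ R → v b - v a = ∫ s in a..b, v' s)
    (r : ℝ) (hr : r ∈ Set.Ioo 0 R)
    (heq : v r = (r / R) ^ N * v R) :
    ∀ s ∈ Set.Icc (0:ℝ) R, v s = (s / R) ^ N * v R := by
  have hN0 : (0:ℝ) < N := lt_of_lt_of_le one_pos hN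
  have hN1 : (0:ℝ) ≤ N - 1 := by linarith
  set φ : ℝ → ℝ := fun s => v' s / s ^ (N - 1) with hφ
  -- v' is a.e. nonnegative on (0,R)
  have hv'nonneg : ∀ᵐ s ∂(volume.restrict (Set.Ioo 0 R)), 0 ≤ v' s := by
    filter_upwards [hderiv, ae_restrict_mem measurableSet_Ioo] with s hd hs
    have hslope : Filter.Tendsto (slope v s) (nhdsWithin s (Set.Ioi s)) (nhds (v' s)) :=
      (hasDerivAt_iff_tendsto_slope.1 hd).mono_left
        (nhdsWithin_mono s (fun x hx => ne_of_gt hx))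
    refine ge_of_tendsto hslope ?_
    filter_upwards [Ioo_mem_nhdsGT_of_mem ⟨le_refl s, hs.2⟩] with t ht
    rw [slope_def_field]
    apply div_nonneg _ (by linarith [ht.1])
    have := hmono ⟨hs.1.le, hs.2.le⟩ ⟨(hs.1.trans ht.1).le, ht.2.le⟩ ht.1.le
    linarith
  -- v' is a.e. strongly measurable on (0,R)
  have hv'meas : AEStronglyMeasurable v' (volume.restrict (Set.Ioo 0 R)) := by
    have h : (deriv v) =ᵐ[volume.restrict (Set.Ioo 0 R)] v' := by
      filter_upwards [hderiv] with s hd using hd.deriv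
    exact (measurable_deriv v).aestronglyMeasurable.congr h
  -- integrability of v' on subintervals
  have hint : ∀ a b : ℝ, a ∈ Set.Ioo 0 R → b ≤ R →
      IntegrableOn v' (Set.Ioo a b) volume := by
    intro a b ha hbR
    have hsub : Set.Ioo a b ⊆ Set.Ioo 0 R := fun x hx =>
      ⟨ha.1.trans hx.1, lt_of_lt_of_le hx.2 hbR⟩
    refine Integrable.mono' (g := fun _ => |φ a| * R ^ (N - 1))
      (integrableOn_const measure_Ioo_lt_top.ne)
      ((hv'meas.mono_measure (Measure.restrict_mono hsub le_rfl)))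
      ?_
    filter_upwards [ae_restrict_of_ae_restrict_of_subset hsub hv'nonneg,
      ae_restrict_mem measurableSet_Ioo] with s h0 hs
    have hspos : 0 < s := ha.1.trans hs.1
    have hsR : s < R := lt_of_lt_of_le hs.2 hbR
    have hvs : v' s = φ s * s ^ (N - 1) := by
      rw [hφ]
      field_simp
    rw [Real.norm_of_nonneg h0, hvs]
    have h1 : φ s ≤ φ a := hanti ha ⟨hspos, hsR⟩ hs.1.le
    have h2 : s ^ (N - 1) ≤ R ^ (N - 1) :=
      Real.rpow_le_rpow hspos.le hsR.le hN1
    have h3 : (0:ℝ) ≤ s ^ (N - 1) := Real.rpow_nonneg hspos.le _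
    calc φ s * s ^ (N - 1) ≤ |φ a| * s ^ (N - 1) :=
          mul_le_mul_of_nonneg_right (h1.trans (le_abs_self _)) h3
      _ ≤ |φ a| * R ^ (N - 1) :=
          mul_le_mul_of_nonneg_left h2 (abs_nonneg _)
  -- FTC over open intervals
  have heqI : ∀ a b : ℝ, 0 < a → a ≤ b → b ≤ R →
      v b - v a = ∫ s in Set.Ioo a b, v' s := by
    intro a b ha hab hbR
    rw [hFTC a b ha hab hbR, intervalIntegral.integral_of_le hab,
      MeasureTheory.integral_Ioc_eq_integral_Ioo]
  -- value of the comparison integral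
  have hRint : ∀ a b K : ℝ, 0 < a → a ≤ b →
      ∫ s in Set.Ioo a b, K * s ^ (N - 1) = K * (b ^ N - a ^ N) / N := by
    intro a b K ha hab
    rw [← MeasureTheory.integral_Ioc_eq_integral_Ioo,
      ← intervalIntegral.integral_of_le hab,
      intervalIntegral.integral_const_mul,
      integral_rpow (Or.inl (by linarith : (-1:ℝ) < N - 1))]
    rw [sub_add_cancel]
    ring
  -- integrability of the comparison integrand
  have hKcont : ∀ K : ℝ, Continuous (fun s : ℝ => K * s ^ (N - 1)) := by
    intro K
    exact continuous_const.mul (continuous_iff_continuousAt.2 fun x =>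
      Real.continuousAt_rpow_const x _ (Or.inr hN1))
  have hKint : ∀ a b K : ℝ, IntegrableOn (fun s : ℝ => K * s ^ (N - 1)) (Set.Ioo a b) volume :=
    fun a b K => ((hKcont K).integrableOn_Icc.mono_set Set.Ioo_subset_Icc_self)
  -- key upper estimate
  have key_le : ∀ a b : ℝ, a ∈ Set.Ioo 0 R → a ≤ b → b ≤ R →
      (v b - v a) * N ≤ φ a * (b ^ N - a ^ N) := by
    intro a b ha hab hbR
    rw [← le_div_iff₀ hN0]
    rw [heqI a b ha.1 hab hbR, ← hRint a b (φ a) ha.1 hab]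
    refine integral_mono_ae (hint a b ha hbR) (hKint a b (φ a)) ?_
    filter_upwards [ae_restrict_mem measurableSet_Ioo] with s hs
    have hspos : 0 < s := ha.1.trans hs.1
    have hsR : s < R := lt_of_lt_of_le hs.2 hbR
    have hvs : v' s = φ s * s ^ (N - 1) := by
      rw [hφ]; field_simp
    rw [hvs]
    exact mul_le_mul_of_nonneg_right (hanti ha ⟨hspos, hsR⟩ hs.1.le)
      (Real.rpow_nonneg hspos.le _)
  -- key lower estimate
  have key_ge : ∀ a b : ℝ, 0 < a → a ≤ b → b ∈ Set.Ioo 0 R →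
      φ b * (b ^ N - a ^ N) ≤ (v b - v a) * N := by
    intro a b ha hab hb
    rw [← div_le_iff₀ hN0]
    have haI : a ∈ Set.Ioo 0 R := ⟨ha, lt_of_le_of_lt hab hb.2⟩
    rw [heqI a b ha hab hb.2.le, ← hRint a b (φ b) ha hab]
    refine integral_mono_ae (hKint a b (φ b)) (hint a b haI hb.2.le) ?_
    filter_upwards [ae_restrict_mem measurableSet_Ioo] with s hs
    have hspos : 0 < s := ha.trans hs.1
    have hsR : s < R := hs.2.trans hb.2
    have hvs : v' s = φ s * s ^ (N - 1) := by
      rw [hφ]; field_simp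
    rw [hvs]
    exact mul_le_mul_of_nonneg_right (hanti ⟨hspos, hsR⟩ hb hs.2.le)
      (Real.rpow_nonneg hspos.le _)
  -- lower estimate down to 0
  have hlow : ∀ s : ℝ, s ∈ Set.Ioo 0 R → φ s * s ^ N ≤ v s * N := by
    intro s hs
    have h1 : ∀ ε : ℝ, ε ∈ Set.Ioo (0:ℝ) s → φ s * (s ^ N - ε ^ N) ≤ v s * N := by
      intro ε hε
      have h2 := key_ge ε s hε.1 hε.2.le hs
      have h3 : 0 ≤ v ε := by
        have := hmono ⟨le_refl 0, hR.le⟩ ⟨hε.1.le, (hε.2.le.trans hs.2.le)⟩ hε.1.le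
        linarith [hv0 ▸ this]
      nlinarith
    have hc : Filter.Tendsto (fun ε : ℝ => φ s * (s ^ N - ε ^ N))
        (nhdsWithin 0 (Set.Ioi 0)) (nhds (φ s * (s ^ N - 0))) := by
      have h0 : Filter.Tendsto (fun ε : ℝ => ε ^ N) (nhdsWithin 0 (Set.Ioi 0)) (nhds 0) := by
        have h1 : Filter.Tendsto (fun ε : ℝ => ε ^ N) (nhdsWithin 0 (Set.Ioi 0))
            (nhds ((0:ℝ) ^ N)) :=
          (Real.continuousAt_rpow_const 0 N (Or.inr hN0.le)).continuousWithinAt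
            (s := Set.Ioi (0:ℝ))
        rwa [Real.zero_rpow hN0.ne'] at h1
      exact (tendsto_const_nhds.sub h0).const_mul _
    rw [sub_zero] at hc
    refine le_of_tendsto hc ?_
    filter_upwards [Ioo_mem_nhdsGT_of_mem ⟨le_refl (0:ℝ), hs.1⟩] with ε hε
    exact h1 ε hε
  -- the constant c
  set c : ℝ := v R / R ^ N with hc
  have hRN : (0:ℝ) < R ^ N := Real.rpow_pos_of_pos hR N
  have hvR : v R = c * R ^ N := by
    rw [hc]; field_simp
  have hform : ∀ s : ℝ, 0 ≤ s → (s / R) ^ N * v R = c * s ^ N := by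
    intro s hs0
    rw [Real.div_rpow hs0 hR.le, hc]
    ring
  have hvr : v r = c * r ^ N := heq.trans (hform r hr.1.le)
  have hd : (0:ℝ) < R ^ N - r ^ N :=
    sub_pos.2 (Real.rpow_lt_rpow hr.1.le hr.2 hN0)
  have hrN : (0:ℝ) < r ^ N := Real.rpow_pos_of_pos hr.1 N
  have hφr_ge : N * c ≤ φ r := by
    have h1 := key_le r R hr hr.2.le le_rfl
    rw [hvR, hvr] at h1
    nlinarith
  have hφr_le : φ r ≤ N * c := by
    have h1 := hlow r hr
    rw [hvr] at h1
    nlinarith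
  have hφr : φ r = N * c := le_antisymm hφr_le hφr_ge
  -- main argument
  intro s hs
  rw [hform s hs.1]
  rcases eq_or_lt_of_le hs.1 with h0 | hs0
  · rw [← h0, Real.zero_rpow hN0.ne', hv0, mul_zero]
  rcases eq_or_lt_of_le hs.2 with hsR | hsR
  · rw [hsR, hvR]
  have hsI : s ∈ Set.Ioo (0:ℝ) R := ⟨hs0, hsR⟩
  have hsN : (0:ℝ) < s ^ N := Real.rpow_pos_of_pos hs0 N
  rcases le_total s r with hsr | hrs
  · -- s ≤ r
    have hup := key_ge s r hs0 hsr hr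
    rw [hφr, hvr] at hup
    have hlo := hlow s hsI
    have hφs : N * c ≤ φ s := hφr ▸ hanti hsI hr hsr
    refine le_antisymm ?_ ?_
    · nlinarith [hup, hsN, hN0]
    · nlinarith [mul_le_mul_of_nonneg_right hφs hsN.le, hlo, hN0]
  · -- r ≤ s
    have hlo := key_le s R hsI hsR.le le_rfl
    have hφs : φ s ≤ N * c := hφr ▸ hanti hr hsI hrs
    have hup := key_le r s hr hrs hsR.le
    rw [hφr, hvr] at hup
    rw [hvR] at hlo
    have hdd : (0:ℝ) ≤ R ^ N - s ^ N :=
      sub_nonneg.2 (Real.rpow_le_rpow hs0.le hsR.le hN0.le)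
    refine le_antisymm ?_ ?_
    · nlinarith [hup, hN0]
    · nlinarith [mul_le_mul_of_nonneg_right hφs hdd, hlo, hN0]
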